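/- Let $(n_1^k, \ldots, n_r^k)_{k\geq 1}$ be a sequence of $r$-tuples in $(\mathbb{Z}^d)^r$. Then there exist a subsequence and a permutation of the indices (keeping the notation), an integer $\kappa \in [1, r]$, a subdivision $1 = r_1 < r_2 < \cdots < r_\kappa \leq r$, and constant vectors $a_j \in \mathbb{Z}^d$ such that: (i) $\min_{1 \leq s \neq s' \leq \kappa} \|n_{r_s}^k - n_{r_{s'}}^k\| \to \infty$ as $k \to \infty$; and (ii) for each index $j$ between consecutive subdivision points $r_s$ and $r_{s+1}$ (and for $j > r_\kappa$ with $s = \kappa$), $n_j^k = n_{r_s}^k + a_j$ for all $k$. Moreover, if $\max_{i\neq j}\|n_i^k - n_j^k\| \to \infty$, one can ensure $\kappa > 1$. -/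

import Mathlib

open Filter

/-- Norm of an integer vector viewed in `ℝᵈ`. -/
noncomputable def iN (d : ℕ) (x : Fin d → ℤ) : ℝ := ‖(fun i => ((x i : ℤ) : ℝ))‖

lemma extract_dichotomy {d : ℕ} (v : ℕ → (Fin d → ℤ)) :
    ∃ ψ : ℕ → ℕ, StrictMono ψ ∧
      ((∃ c, ∀ k, v (ψ k) = c) ∨ Tendsto (fun k => iN d (v (ψ k))) atTop atTop) := by
  by_cases h : ∃ c, ∃ᶠ k in atTop, v k = c
  · obtain ⟨c, hc⟩ := h
    obtain ⟨ψ, hψ, h2⟩ := Filter.extraction_of_frequently_atTop hc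
    exact ⟨ψ, hψ, Or.inl ⟨c, h2⟩⟩
  · push_neg at h
    have hfin : ∀ c : Fin d → ℤ, {k | v k = c}.Finite := by
      intro c
      by_contra hinf
      have hfr : ∃ᶠ k in atTop, v k = c := Nat.frequently_atTop_iff_infinite.2 fun hf => hinf hf
      exact hfr (h c)
    refine ⟨id, strictMono_id, Or.inr ?_⟩
    rw [tendsto_atTop]
    intro b
    have hS : {x : Fin d → ℤ | iN d x < b}.Finite := by
      have hsub : {x : Fin d → ℤ | iN d x < b} ⊆
          Set.pi Set.univ (fun _ : Fin d => Set.Icc (-⌈b⌉) ⌈b⌉) := by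
        intro x hx i _
        have h1 : |((x i : ℤ) : ℝ)| ≤ iN d x := by
          simpa [Real.norm_eq_abs, iN] using norm_le_pi_norm (fun i => ((x i : ℤ) : ℝ)) i
        have h2 : |((x i : ℤ) : ℝ)| < b := lt_of_le_of_lt h1 hx
        have h3 : ((x i : ℤ) : ℝ) ≤ (⌈b⌉ : ℝ) :=
          le_trans (le_trans (le_abs_self _) h2.le) (Int.le_ceil b)
        have h4 : (-(⌈b⌉ : ℤ) : ℝ) ≤ ((x i : ℤ) : ℝ) := by
          have := neg_abs_le ((x i : ℤ) : ℝ)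
          nlinarith [Int.le_ceil b, le_abs_self ((x i : ℤ) : ℝ)]
        exact Set.mem_Icc.2 ⟨by exact_mod_cast h4, by exact_mod_cast h3⟩
      exact (Set.Finite.pi fun _ => Set.finite_Icc _ _).subset hsub
    rw [← Nat.cofinite_eq_atTop, eventually_cofinite]
    have : {k | ¬ b ≤ iN d (v k)} ⊆ ⋃ x ∈ {x : Fin d → ℤ | iN d x < b}, {k | v k = x} := by
      intro k hk
      simp only [Set.mem_setOf_eq, not_le] at hk
      exact Set.mem_biUnion hk rfl
    exact (hS.biUnion fun x _ => hfin x).subset this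

lemma extract_list {d r : ℕ} (m : ℕ → Fin r → (Fin d → ℤ)) (l : List (Fin r × Fin r)) :
    ∃ ψ : ℕ → ℕ, StrictMono ψ ∧ ∀ p ∈ l,
      ((∃ c, ∀ k, m (ψ k) p.1 - m (ψ k) p.2 = c) ∨
        Tendsto (fun k => iN d (m (ψ k) p.1 - m (ψ k) p.2)) atTop atTop) := by
  induction l with
  | nil => exact ⟨id, strictMono_id, by simp⟩
  | cons p l ih =>
    obtain ⟨ψ, hψ, hl⟩ := ih
    obtain ⟨ψ', hψ', hp⟩ := extract_dichotomy (fun k => m (ψ k) p.1 - m (ψ k) p.2)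
    refine ⟨ψ ∘ ψ', hψ.comp hψ', ?_⟩
    intro q hq
    rcases List.mem_cons.1 hq with rfl | hq
    · exact hp
    · rcases hl q hq with ⟨c, hc⟩ | ht
      · exact Or.inl ⟨c, fun k => hc (ψ' k)⟩
      · exact Or.inr (ht.comp hψ'.tendsto_atTop)

lemma iN_def (d : ℕ) (x : Fin d → ℤ) : iN d x = ‖(fun i => ((x i : ℤ) : ℝ))‖ := rfl

/-- Clustering lemma: from any sequence of `r`-tuples in `(ℤᵈ)ʳ` one can extract a
subsequence and permute the indices so that the tuples split into blocks, indexed by a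
subdivision `1 = r₁ < r₂ < ⋯ < r_κ ≤ r`, with leaders mutually diverging and the other
entries at constant offsets `a_j` from their block leaders.  If moreover
`max_{i≠j} ‖n_i^k - n_j^k‖ → ∞`, one can ensure `κ > 1`. -/
theorem clustering_subsequence_lemma
    (d r : ℕ) (hr : 1 ≤ r) (m : ℕ → Fin r → (Fin d → ℤ)) :
    ∃ φ : ℕ → ℕ, StrictMono φ ∧
    ∃ σ : Equiv.Perm (Fin r),
    ∃ κ : ℕ, ∃ hκ : 1 ≤ κ, κ ≤ r ∧
    ∃ rp : Fin κ → Fin r, StrictMono rp ∧ rp ⟨0, hκ⟩ = ⟨0, hr⟩ ∧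
    ∃ blk : Fin r → Fin κ, ∃ a : Fin r → (Fin d → ℤ),
      (∀ s s' : Fin κ, s ≠ s' →
        Tendsto (fun k => ‖(fun i => ((m (φ k) (σ (rp s)) i
            - m (φ k) (σ (rp s')) i : ℤ) : ℝ))‖) atTop atTop) ∧
      (∀ s, blk (rp s) = s) ∧
      (∀ j, rp (blk j) ≤ j) ∧
      (∀ j s, rp s ≤ j → s ≤ blk j) ∧
      (∀ j k, m (φ k) (σ j) = m (φ k) (σ (rp (blk j))) + a j) ∧
      ((∀ C : ℝ, ∀ᶠ k in atTop, ∃ i j : Fin r, i ≠ j ∧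
          C ≤ ‖(fun i' => ((m k i i' - m k j i' : ℤ) : ℝ))‖) → 1 < κ) := by
  classical
  obtain ⟨ψ, hψ, hGood⟩ := extract_list m (Finset.univ : Finset (Fin r × Fin r)).toList
  have hGood' : ∀ i j : Fin r,
      ((∃ c, ∀ k, m (ψ k) i - m (ψ k) j = c) ∨
        Tendsto (fun k => iN d (m (ψ k) i - m (ψ k) j)) atTop atTop) := by
    intro i j
    exact hGood (i, j) (by simp [Finset.mem_toList])
  set R : Fin r → Fin r → Prop := fun i j => ∃ c, ∀ k, m (ψ k) i - m (ψ k) j = c with hRdef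
  have hequiv : Equivalence R := by
    constructor
    · exact fun i => ⟨0, fun k => sub_self _⟩
    · rintro i j ⟨c, hc⟩
      exact ⟨-c, fun k => by rw [← hc k]; abel⟩
    · rintro i j l ⟨c, hc⟩ ⟨c', hc'⟩
      exact ⟨c + c', fun k => by rw [← hc k, ← hc' k]; abel⟩
  set st : Setoid (Fin r) := ⟨R, hequiv⟩ with hstdef
  haveI : DecidableRel ((· ≈ ·) : Fin r → Fin r → Prop) := fun _ _ => Classical.dec _
  set κ := Fintype.card (Quotient st) with hκdef
  haveI : Nonempty (Quotient st) := ⟨Quotient.mk st ⟨0, hr⟩⟩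
  have hκ : 1 ≤ κ := Fintype.card_pos
  have hκr : κ ≤ r := by
    have := Fintype.card_quotient_le st
    simpa using this
  set e := Fintype.equivFin (Quotient st) with hedef
  set c : Fin r → Fin κ := fun i => e (Quotient.mk st i) with hcdef
  have hc : ∀ i j, c i = c j ↔ R i j := by
    intro i j
    constructor
    · intro h
      have : Quotient.mk st i = Quotient.mk st j := e.injective h
      exact Quotient.eq.1 this
    · intro h
      simp only [hcdef]
      exact congrArg e (Quotient.sound h)
  have hcsurj : Function.Surjective c := by
    intro s
    obtain ⟨q, hq⟩ := e.surjective s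
    obtain ⟨i, rfl⟩ := Quotient.mk_surjective q
    exact ⟨i, hq⟩
  set σ : Equiv.Perm (Fin r) := Tuple.sort c with hσdef
  set g : Fin r → Fin κ := fun j => c (σ j) with hgdef
  have hgmono : Monotone g := Tuple.monotone_sort c
  have hgsurj : Function.Surjective g := fun s => by
    obtain ⟨i, hi⟩ := hcsurj s
    exact ⟨σ.symm i, by simp [hgdef, hi]⟩
  have hfib : ∀ s : Fin κ, (Finset.univ.filter (fun j => g j = s)).Nonempty := by
    intro s
    obtain ⟨j, hj⟩ := hgsurj s
    exact ⟨j, by simp [hj]⟩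
  set rp : Fin κ → Fin r := fun s => (Finset.univ.filter (fun j => g j = s)).min' (hfib s)
    with hrpdef
  have hrp_mem : ∀ s, g (rp s) = s := by
    intro s
    have := Finset.min'_mem _ (hfib s)
    simpa using this
  have hrp_min : ∀ s j, g j = s → rp s ≤ j := by
    intro s j hj
    exact Finset.min'_le _ _ (by simp [hj])
  have hrpmono : StrictMono rp := by
    intro s s' hss
    by_contra hle
    push_neg at hle
    have := hgmono hle
    rw [hrp_mem, hrp_mem] at this
    exact absurd hss (not_lt.2 this)
  have hrp0 : rp ⟨0, hκ⟩ = ⟨0, hr⟩ := by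
    have hg0 : g ⟨0, hr⟩ = ⟨0, hκ⟩ := by
      obtain ⟨j, hj⟩ := hgsurj ⟨0, hκ⟩
      have h1 : g ⟨0, hr⟩ ≤ g j := hgmono (by simp [Fin.le_def])
      rw [hj] at h1
      exact le_antisymm h1 (by simp [Fin.le_def])
    exact le_antisymm (hrp_min _ _ hg0) (by simp [Fin.le_def])
  -- offsets
  have hRoff : ∀ j : Fin r, R (σ j) (σ (rp (g j))) := by
    intro j
    have : c (σ j) = c (σ (rp (g j))) := (hrp_mem (g j)).symm
    exact (hc _ _).1 this
  refine ⟨ψ, hψ, σ, κ, hκ, hκr, rp, hrpmono, hrp0, g,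
    fun j => Classical.choose (hRoff j), ?_, hrp_mem, fun j => hrp_min _ _ rfl,
    ?_, ?_, ?_⟩
  · -- divergence
    intro s s' hss
    have hne : ¬ R (σ (rp s)) (σ (rp s')) := by
      intro hR
      have := (hc _ _).2 hR
      rw [show c (σ (rp s)) = g (rp s) from rfl, show c (σ (rp s')) = g (rp s') from rfl,
        hrp_mem, hrp_mem] at this
      exact hss this
    rcases hGood' (σ (rp s)) (σ (rp s')) with h | h
    · exact absurd h hne
    · have : (fun k => iN d (m (ψ k) (σ (rp s)) - m (ψ k) (σ (rp s')))) =
          fun k => ‖(fun i => ((m (ψ k) (σ (rp s)) i - m (ψ k) (σ (rp s')) i : ℤ) : ℝ))‖ := by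
        funext k
        rw [iN_def]
        congr 1
      rwa [this] at h
  · intro j s hsj
    have := hgmono hsj
    rwa [hrp_mem] at this
  · intro j k
    have := Classical.choose_spec (hRoff j) k
    exact sub_eq_iff_eq_add'.1 this
  · intro hyp
    by_contra h1
    have hκ1 : κ = 1 := by omega
    have hRall : ∀ i j : Fin r, R i j := by
      intro i j
      apply (hc i j).1
      apply Fin.ext
      have := (c i).isLt
      have := (c j).isLt
      omega
    set cc : Fin r → Fin r → (Fin d → ℤ) := fun i j => Classical.choose (hRall i j) with hccdef
    have hcc : ∀ i j k, m (ψ k) i - m (ψ k) j = cc i j := fun i j =>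
      Classical.choose_spec (hRall i j)
    obtain ⟨B, hB⟩ := Finite.exists_le (fun p : Fin r × Fin r => iN d (cc p.1 p.2))
    obtain ⟨k₀, i, j, hij, hle⟩ := (hψ.tendsto_atTop.eventually (hyp (B + 1))).exists
    have heq : ‖(fun i' => ((m (ψ k₀) i i' - m (ψ k₀) j i' : ℤ) : ℝ))‖ = iN d (cc i j) := by
      rw [← hcc i j k₀, iN_def]
      congr 1
    rw [heq] at hle
    have := hB (i, j)
    simp only at this
    linarith
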